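/- Let F_e : 2^V → ℝ_+ (e ∈ E) be nonnegative submodular functions with F_e(∅)=F_e(V)=0. Define the effective resistance R_F(u,v) as the optimal value of min { ‖φ‖² : φ ≥ 0, Σ_e φ(e) F_e(X) ≥ (e_u − e_v)(X) for all X ⊆ V } (and +∞ if infeasible). Then R_F satisfies the triangle inequality: R_F(u,v) + R_F(v,w) ≥ R_F(u,w) for all u, v, w ∈ V, whenever R_F(u,v) and R_F(v,w) are finite. -/
import Mathlib


open scoped BigOperators

/-- Triangle inequality for the effective resistance defined via the dual problem
`R_F(u,v) = min { ‖φ‖² : φ ≥ 0, Σ_e φ(e) F_e(X) ≥ (e_u − e_v)(X) ∀X }`,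
assuming `R_F(u,v)` and `R_F(v,w)` are finite (i.e., the two problems are feasible). -/
theorem effective_resistance_triangle {V E : Type*} [Fintype V] [DecidableEq V] [Fintype E]
    (F : E → Finset V → ℝ)
    (hsub : ∀ e (S T : Finset V), F e (S ∪ T) + F e (S ∩ T) ≤ F e S + F e T)
    (hnn : ∀ e S, 0 ≤ F e S)
    (h0 : ∀ e, F e ∅ = 0) (hV : ∀ e, F e Finset.univ = 0)
    (u v w : V) :
    let feas : (V → ℝ) → (E → ℝ) → Prop := fun b φ =>
      (∀ e, 0 ≤ φ e) ∧ ∀ X : Finset V, (∑ x ∈ X, b x) ≤ ∑ e, φ e * F e X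
    let R : (V → ℝ) → ℝ := fun b =>
      sInf {r : ℝ | ∃ φ : E → ℝ, feas b φ ∧ r = ∑ e, (φ e) ^ 2}
    (∃ φ, feas (Pi.single u (1 : ℝ) - Pi.single v 1) φ) →
    (∃ φ, feas (Pi.single v (1 : ℝ) - Pi.single w 1) φ) →
    R (Pi.single u (1 : ℝ) - Pi.single w 1) ≤
      R (Pi.single u (1 : ℝ) - Pi.single v 1) +
      R (Pi.single v (1 : ℝ) - Pi.single w 1) := by
  intro feas R h1 h2
  obtain ⟨φ0, hφ0⟩ := h1
  obtain ⟨ψ0, hψ0⟩ := h2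
  have sumb : ∀ (a b : V) (X : Finset V),
      (∑ x ∈ X, ((Pi.single a (1:ℝ) - Pi.single b 1 : V → ℝ)) x)
      = (if a ∈ X then (1:ℝ) else 0) - (if b ∈ X then 1 else 0) := by
    intro a b X
    simp [Pi.sub_apply, Pi.single_apply, Finset.sum_sub_distrib, Finset.sum_ite_eq']
  -- Combination: pointwise max of feasible duals is feasible for the composed demand.
  have combine : ∀ φ ψ, feas (Pi.single u (1:ℝ) - Pi.single v 1) φ →
      feas (Pi.single v (1:ℝ) - Pi.single w 1) ψ →
      feas (Pi.single u (1:ℝ) - Pi.single w 1) (fun e => max (φ e) (ψ e)) := by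
    rintro φ ψ ⟨hφnn, hφ⟩ ⟨hψnn, hψ⟩
    refine ⟨fun e => le_max_of_le_left (hφnn e), fun X => ?_⟩
    have h1' := hφ X
    have h2' := hψ X
    rw [sumb] at h1' h2' ⊢
    have hmax1 : ∑ e, φ e * F e X ≤ ∑ e, max (φ e) (ψ e) * F e X :=
      Finset.sum_le_sum fun e _ => mul_le_mul_of_nonneg_right (le_max_left _ _) (hnn e X)
    have hmax2 : ∑ e, ψ e * F e X ≤ ∑ e, max (φ e) (ψ e) * F e X :=
      Finset.sum_le_sum fun e _ => mul_le_mul_of_nonneg_right (le_max_right _ _) (hnn e X)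
    have key : ((if u ∈ X then (1:ℝ) else 0) - if w ∈ X then 1 else 0) ≤
        max ((if u ∈ X then (1:ℝ) else 0) - if v ∈ X then 1 else 0)
            ((if v ∈ X then (1:ℝ) else 0) - if w ∈ X then 1 else 0) := by
      split_ifs <;> simp <;> norm_num
    calc ((if u ∈ X then (1:ℝ) else 0) - if w ∈ X then 1 else 0)
        ≤ max (∑ e, φ e * F e X) (∑ e, ψ e * F e X) := key.trans (max_le_max h1' h2')
      _ ≤ ∑ e, max (φ e) (ψ e) * F e X := max_le hmax1 hmax2
  have hbdd : ∀ b : V → ℝ, BddBelow {r : ℝ | ∃ φ : E → ℝ, feas b φ ∧ r = ∑ e, (φ e) ^ 2} := by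
    intro b
    refine ⟨0, ?_⟩
    rintro r ⟨φ, _, rfl⟩
    exact Finset.sum_nonneg fun e _ => sq_nonneg _
  -- Main bound: R(u,w) ≤ ‖φ‖² + ‖ψ‖² for any feasible φ, ψ.
  have main : ∀ φ ψ, feas (Pi.single u (1:ℝ) - Pi.single v 1) φ →
      feas (Pi.single v (1:ℝ) - Pi.single w 1) ψ →
      R (Pi.single u (1:ℝ) - Pi.single w 1) ≤ (∑ e, (φ e) ^ 2) + (∑ e, (ψ e) ^ 2) := by
    intro φ ψ hφ hψ
    have hmem : (∑ e, (max (φ e) (ψ e)) ^ 2) ∈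
        {r : ℝ | ∃ χ : E → ℝ, feas (Pi.single u (1:ℝ) - Pi.single w 1) χ ∧
          r = ∑ e, (χ e) ^ 2} := ⟨fun e => max (φ e) (ψ e), combine φ ψ hφ hψ, rfl⟩
    refine (csInf_le (hbdd _) hmem).trans ?_
    rw [← Finset.sum_add_distrib]
    refine Finset.sum_le_sum fun e _ => ?_
    rcases max_cases (φ e) (ψ e) with ⟨h, _⟩ | ⟨h, _⟩ <;> rw [h] <;> nlinarith [sq_nonneg (φ e), sq_nonneg (ψ e)]
  -- First infimum pass: over ψ.
  have step1 : ∀ φ, feas (Pi.single u (1:ℝ) - Pi.single v 1) φ →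
      R (Pi.single u (1:ℝ) - Pi.single w 1) ≤ (∑ e, (φ e) ^ 2) +
        R (Pi.single v (1:ℝ) - Pi.single w 1) := by
    intro φ hφ
    rw [← sub_le_iff_le_add']
    refine le_csInf ⟨_, ψ0, hψ0, rfl⟩ ?_
    rintro r ⟨ψ, hψ, rfl⟩
    linarith [main φ ψ hφ hψ]
  -- Second infimum pass: over φ.
  rw [← sub_le_iff_le_add]
  refine le_csInf ⟨_, φ0, hφ0, rfl⟩ ?_
  rintro r ⟨φ, hφ, rfl⟩
  linarith [step1 φ hφ]
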